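/- Let A, B, C be random variables on a common probability space, each taking only the values −1 and +1. Then −1 ≤ E(AB) + E(BC) + E(AC). -/

import Mathlib

open MeasureTheory

/-- Lower Suppes–Zanotti inequality: for ±1-valued random variables `A`, `B`,
`C` on a common probability space, `-1 ≤ E(AB) + E(BC) + E(AC)`. -/
theorem suppes_zanotti_lower
    {Ω : Type*} [MeasurableSpace Ω] (P : Measure Ω) [IsProbabilityMeasure P]
    (A B C : Ω → ℝ) (hA : Measurable A) (hB : Measurable B) (hC : Measurable C)
    (hAv : ∀ ω, A ω = -1 ∨ A ω = 1) (hBv : ∀ ω, B ω = -1 ∨ B ω = 1)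
    (hCv : ∀ ω, C ω = -1 ∨ C ω = 1) :
    -1 ≤ (∫ ω, A ω * B ω ∂P) + (∫ ω, B ω * C ω ∂P) + (∫ ω, A ω * C ω ∂P) := by
  have hint : ∀ (f g : Ω → ℝ), Measurable f → Measurable g →
      (∀ ω, f ω = -1 ∨ f ω = 1) → (∀ ω, g ω = -1 ∨ g ω = 1) →
      Integrable (fun ω => f ω * g ω) P := by
    intro f g hf hg hfv hgv
    apply Integrable.mono' (integrable_const (1 : ℝ))
    · exact (hf.mul hg).aestronglyMeasurable
    · filter_upwards with ω
      rcases hfv ω with h1 | h1 <;> rcases hgv ω with h2 | h2 <;> simp [h1, h2]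
  have hAB := hint A B hA hB hAv hBv
  have hBC := hint B C hB hC hBv hCv
  have hAC := hint A C hA hC hAv hCv
  have key : (∫ ω, (-1 : ℝ) ∂P) ≤ ∫ ω, (A ω * B ω + B ω * C ω + A ω * C ω) ∂P := by
    apply integral_mono (integrable_const _) ((hAB.add hBC).add hAC)
    intro ω
    rcases hAv ω with h1 | h1 <;> rcases hBv ω with h2 | h2 <;>
      rcases hCv ω with h3 | h3 <;> simp [h1, h2, h3] <;> norm_num
  rw [integral_const] at key
  simp only [measure_univ, ENNReal.toReal_one, probReal_univ, smul_eq_mul, one_mul] at key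
  have h1 := integral_add hAB hBC
  have h2 := integral_add (hAB.add hBC) hAC
  simp only [Pi.add_apply] at h1 h2
  linarith
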